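/- For a connected graph G of order n, the average eccentricity of G is at most (1/n)·⌊3n²/4 − n/2⌋. -/

import Mathlib

open SimpleGraph Finset

noncomputable def ecc {V : Type*} [Fintype V] (G : SimpleGraph V) (v : V) : ℕ :=
  Finset.univ.sup (G.dist v)

noncomputable def avec {V : Type*} [Fintype V] (G : SimpleGraph V) : ℝ :=
  (∑ v, (ecc G v : ℝ)) / (Fintype.card V)

namespace AvecAux

open scoped Classical

/-- `F n = ⌊(3n² - 2n)/4⌋`, the claimed upper bound for the sum of eccentricities. -/
def F (n : ℕ) : ℕ := (3 * n ^ 2 - 2 * n) / 4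

lemma F_step (m : ℕ) : F m + m + (m + 1) / 2 ≤ F (m + 1) := by
  rcases Nat.even_or_odd m with ⟨s, hs⟩ | ⟨s, hs⟩ <;> subst hs <;> unfold F
  · have e1 : (s + s) ^ 2 = 4 * (s * s) := by ring
    have e2 : (s + s + 1) ^ 2 = 4 * (s * s) + 4 * s + 1 := by ring
    have hst : s ≤ s * s := by
      rcases Nat.eq_zero_or_pos s with h | h
      · simp [h]
      · exact Nat.le_mul_of_pos_left s h
    rw [e1, e2]
    omega
  · have e1 : (2 * s + 1) ^ 2 = 4 * (s * s) + 4 * s + 1 := by ring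
    have e2 : (2 * s + 1 + 1) ^ 2 = 4 * (s * s) + 8 * s + 4 := by ring
    rw [e1, e2]
    omega

universe u

/-- Main induction: in a connected graph on `n` vertices the sum of eccentricities
is at most `F n`. -/
lemma main_step {V : Type u} [Fintype V] (G : SimpleGraph V) (hG : G.Connected)
    (n : ℕ) (hn : Fintype.card V = n) (hn2 : 2 ≤ n)
    (a b : V) (hab : a ≠ b) (hmax : ∀ u w : V, G.dist u w ≤ G.dist a b)
    (hK : 2 * (univ.filter
      (fun v => v ≠ a ∧ ∀ u, u ≠ a → G.dist v u < ecc G v)).card ≤ n)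
    (IH : ∀ (W : Type u) [Fintype W] (H : SimpleGraph W), H.Connected →
        Fintype.card W = n - 1 → ∑ w, ecc H w ≤ F (n - 1)) :
    ∑ v, ecc G v ≤ F n := by
  classical
  set Ka : Finset V :=
    univ.filter (fun v => v ≠ a ∧ ∀ u, u ≠ a → G.dist v u < ecc G v) with hKa
  let G' : SimpleGraph {v : V // v ≠ a} := G.comap (Function.Embedding.subtype _)
  let emb : G' ↪g G := SimpleGraph.Embedding.comap (Function.Embedding.subtype _) G
  have hba : b ≠ a := Ne.symm hab
  -- every vertex ≠ a has a walk to b avoiding a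
  have havoid : ∀ u : V, u ≠ a → ∃ p : G.Walk u b, a ∉ p.support := by
    intro u hu
    obtain ⟨p, hp⟩ := (hG.preconnected u b).exists_walk_length_eq_dist
    refine ⟨p, fun ha => ?_⟩
    have h1 : G.dist u a ≤ (p.takeUntil a ha).length := SimpleGraph.dist_le _
    have h2 : G.dist a b ≤ (p.dropUntil a ha).length := SimpleGraph.dist_le _
    have h3 : (p.takeUntil a ha).length + (p.dropUntil a ha).length = p.length := by
      rw [← SimpleGraph.Walk.length_append, SimpleGraph.Walk.take_spec]
    have h4 : G.dist u b ≤ G.dist a b := hmax u b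
    have h5 : G.dist u a = 0 := by omega
    exact hu (hG.dist_eq_zero_iff.mp h5)
  -- lifting walks avoiding a to the induced subgraph
  have hlift : ∀ (u w : V) (p : G.Walk u w), (∀ y ∈ p.support, y ≠ a) →
      ∀ (hu : u ≠ a) (hw : w ≠ a), G'.Reachable ⟨u, hu⟩ ⟨w, hw⟩ := by
    intro u w p
    induction p with
    | nil => intro _ hu hw; exact Reachable.refl _
    | @cons u y w h q ih =>
      intro hs hu hw
      have hy : y ≠ a := hs y (by simp)
      have hadj : G'.Adj ⟨u, hu⟩ ⟨y, hy⟩ := h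
      exact hadj.reachable.trans (ih (fun z hz => hs z (by simp [hz])) hy hw)
  have hG' : G'.Connected := by
    haveI : Nonempty {v : V // v ≠ a} := ⟨⟨b, hba⟩⟩
    apply SimpleGraph.Connected.mk
    intro u w
    obtain ⟨p, hp⟩ := havoid u.val u.prop
    obtain ⟨q, hq⟩ := havoid w.val w.prop
    have r1 := hlift _ _ p (fun y hy hya => hp (hya ▸ hy)) u.prop hba
    have r2 := hlift _ _ q (fun y hy hya => hq (hya ▸ hy)) w.prop hba
    exact r1.trans r2.symm
  have hcard' : Fintype.card {v : V // v ≠ a} = n - 1 := by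
    have h := Fintype.card_subtype_compl (fun v : V => v = a)
    rw [Fintype.card_subtype_eq] at h
    rw [← hn]
    exact h
  -- distances in G are at most distances in G'
  have hdist : ∀ u w : {v : V // v ≠ a}, G.dist u.val w.val ≤ G'.dist u w := by
    intro u w
    obtain ⟨p, hp⟩ := (hG'.preconnected u w).exists_walk_length_eq_dist
    have h := SimpleGraph.dist_le (p.map emb.toHom)
    rw [SimpleGraph.Walk.length_map, hp] at h
    exact h
  have hdist_le_ecc' : ∀ (v' : {v : V // v ≠ a}) (u : V) (hu : u ≠ a),
      G.dist v'.val u ≤ ecc G' v' :=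
    fun v' u hu => (hdist v' ⟨u, hu⟩).trans (Finset.le_sup (mem_univ (⟨u, hu⟩ : {v : V // v ≠ a})))
  -- eccentricity of a is at most n - 1
  have hEa : ecc G a ≤ n - 1 := by
    apply Finset.sup_le
    intro w _
    obtain ⟨p, hp⟩ := (hG.preconnected a w).exists_walk_length_eq_dist
    have h1 := SimpleGraph.dist_le p.bypass
    have h2 := p.bypass_isPath.length_lt
    rw [hn] at h2
    omega
  -- a has a neighbor y ≠ a
  obtain ⟨y, hya, hy⟩ : ∃ y, G.Adj a y ∧ y ≠ a := by
    obtain ⟨p, hp⟩ := (hG.preconnected a b).exists_walk_length_eq_dist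
    cases p with
    | nil => exact absurd rfl hab
    | cons h q => exact ⟨_, h, h.ne.symm⟩
  have hdya : G.dist y a ≤ 1 := by
    have := SimpleGraph.dist_le (SimpleGraph.Walk.cons hya.symm SimpleGraph.Walk.nil)
    simpa using this
  -- the per-vertex bound
  have hbound : ∀ v' : {v : V // v ≠ a},
      ecc G v'.val ≤ ecc G' v' + (if v'.val ∈ Ka then 1 else 0) := by
    intro v'
    by_cases hvK : v'.val ∈ Ka
    · simp only [hvK, if_true]
      apply Finset.sup_le
      intro u _
      by_cases hu : u = a
      · subst hu
        calc G.dist v'.val u ≤ G.dist v'.val y + G.dist y u := hG.dist_triangle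
          _ ≤ ecc G' v' + 1 := by
              have h5 := hdist_le_ecc' v' y hy
              omega
      · have h5 := hdist_le_ecc' v' u hu
        omega
    · simp only [hvK, if_false, add_zero]
      simp only [hKa, Finset.mem_filter, mem_univ, true_and] at hvK
      push_neg at hvK
      obtain ⟨u, hu, huge⟩ := hvK v'.prop
      calc ecc G v'.val ≤ G.dist v'.val u := huge
        _ ≤ ecc G' v' := hdist_le_ecc' v' u hu
  -- split the sum
  have hsplit : ∑ v, ecc G v = ecc G a + ∑ v' : {v : V // v ≠ a}, ecc G v'.val := by
    rw [← Finset.add_sum_erase univ (ecc G) (mem_univ a)]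
    congr 1
    exact Finset.sum_subtype (p := fun v => v ≠ a) (univ.erase a)
      (fun x => by simp) (ecc G)
  have hsum' : ∑ v' : {v : V // v ≠ a}, ecc G v'.val ≤ F (n - 1) + Ka.card := by
    calc ∑ v' : {v : V // v ≠ a}, ecc G v'.val
        ≤ ∑ v' : {v : V // v ≠ a}, (ecc G' v' + (if v'.val ∈ Ka then 1 else 0)) :=
          Finset.sum_le_sum (fun v' _ => hbound v')
      _ = (∑ v' : {v : V // v ≠ a}, ecc G' v') +
          (∑ v' : {v : V // v ≠ a}, (if v'.val ∈ Ka then 1 else 0)) :=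
          Finset.sum_add_distrib
      _ ≤ F (n - 1) + Ka.card := by
          gcongr
          · exact IH _ G' hG' hcard'
          · rw [← Finset.card_filter]
            apply Finset.card_le_card_of_injOn (fun v' => v'.val)
            · intro v' hv'
              simp only [Finset.mem_coe, Finset.mem_filter] at hv'
              exact hv'.2
            · exact fun x _ y _ h => Subtype.ext h
  have hF := F_step (n - 1)
  have hn1 : n - 1 + 1 = n := by omega
  rw [hn1] at hF
  omega

lemma key (n : ℕ) : ∀ (V : Type u) [Fintype V] (G : SimpleGraph V),
    G.Connected → Fintype.card V = n → ∑ v, ecc G v ≤ F n := by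
  induction n using Nat.strong_induction_on with
  | _ n IH =>
    intro V _ G hG hn
    rcases Nat.lt_or_ge n 2 with hn2 | hn2
    · -- n ≤ 1 : all eccentricities are 0
      have hsub : Subsingleton V := by
        rw [← Fintype.card_le_one_iff_subsingleton, hn]; omega
      have h0 : ∀ v, ecc G v = 0 := by
        intro v
        apply Nat.le_zero.mp
        apply Finset.sup_le
        intro u _
        have : u = v := Subsingleton.elim u v
        subst this
        simp [SimpleGraph.dist_self]
      calc ∑ v, ecc G v = 0 := by simp [h0]
        _ ≤ F n := Nat.zero_le _
    · have hne : Nonempty V := Fintype.card_pos_iff.mp (by omega)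
      obtain ⟨p, -, hp⟩ := Finset.exists_max_image (univ : Finset (V × V))
        (fun p : V × V => G.dist p.1 p.2) univ_nonempty
      set a := p.1
      set b := p.2
      have hmax : ∀ u w : V, G.dist u w ≤ G.dist a b := fun u w => hp (u, w) (mem_univ _)
      have hab : a ≠ b := by
        intro h
        obtain ⟨c, hc⟩ := Fintype.exists_ne_of_one_lt_card (by omega) a
        have h1 : 0 < G.dist a c := hG.pos_dist_of_ne (Ne.symm hc)
        have h2 := hmax a c
        rw [← h] at h2
        rw [SimpleGraph.dist_self] at h2
        omega
      have hdisj : Disjoint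
          (univ.filter (fun v => v ≠ a ∧ ∀ u, u ≠ a → G.dist v u < ecc G v))
          (univ.filter (fun v => v ≠ b ∧ ∀ u, u ≠ b → G.dist v u < ecc G v)) := by
        rw [Finset.disjoint_left]
        intro v hva hvb
        simp only [Finset.mem_filter, mem_univ, true_and] at hva hvb
        obtain ⟨w, -, hw⟩ := Finset.exists_mem_eq_sup (univ : Finset V)
          univ_nonempty (G.dist v)
        have hw' : ecc G v = G.dist v w := hw
        by_cases hwa : w = a
        · subst hwa
          have h2 := hvb.2 a hab
          omega
        · have h2 := hva.2 w hwa
          omega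
      have hcards : (univ.filter (fun v => v ≠ a ∧ ∀ u, u ≠ a → G.dist v u < ecc G v)).card
          + (univ.filter (fun v => v ≠ b ∧ ∀ u, u ≠ b → G.dist v u < ecc G v)).card ≤ n := by
        rw [← Finset.card_union_of_disjoint hdisj, ← hn]
        exact Finset.card_le_univ _
      have IH' : ∀ (W : Type u) [Fintype W] (H : SimpleGraph W), H.Connected →
          Fintype.card W = n - 1 → ∑ w, ecc H w ≤ F (n - 1) :=
        fun W _ H hH hc => IH (n - 1) (by omega) W H hH hc
      rcases le_total
        ((univ.filter (fun v => v ≠ a ∧ ∀ u, u ≠ a → G.dist v u < ecc G v)).card)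
        ((univ.filter (fun v => v ≠ b ∧ ∀ u, u ≠ b → G.dist v u < ecc G v)).card) with h | h
      · exact main_step G hG n hn hn2 a b hab hmax (by omega) IH'
      · refine main_step G hG n hn hn2 b a (Ne.symm hab)
          (fun u w => (hmax u w).trans_eq (SimpleGraph.dist_comm)) (by omega) IH'

end AvecAux

theorem stmt0 {V : Type*} [Fintype V] (G : SimpleGraph V) (hG : G.Connected)
    (n : ℕ) (hn : Fintype.card V = n) :
    avec G ≤ (1 / (n : ℝ)) * ((⌊3 * (n : ℝ) ^ 2 / 4 - (n : ℝ) / 2⌋ : ℤ) : ℝ) := by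
  have hsum := AvecAux.key n V G hG hn
  rcases Nat.eq_zero_or_pos n with h0 | hpos
  · subst h0
    haveI : IsEmpty V := Fintype.card_eq_zero_iff.mp hn
    rw [avec, Finset.univ_eq_empty, Finset.sum_empty, hn]
    norm_num
  · -- the floor equals F n
    have hnn : n ≤ n ^ 2 := Nat.le_self_pow (by norm_num) n
    have h2n : 2 * n ≤ 3 * n ^ 2 := by omega
    set M : ℕ := 3 * n ^ 2 - 2 * n with hM
    have hcast : 3 * (n : ℝ) ^ 2 / 4 - (n : ℝ) / 2 = ((M : ℕ) : ℝ) / 4 := by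
      rw [hM, Nat.cast_sub h2n]
      push_cast
      ring
    have hdm := Nat.div_add_mod M 4
    have hlt : M % 4 < 4 := Nat.mod_lt _ (by norm_num)
    have hR : 4 * (((M / 4 : ℕ)) : ℝ) + ((M % 4 : ℕ) : ℝ) = (M : ℝ) := by
      exact_mod_cast hdm
    have hltR : ((M % 4 : ℕ) : ℝ) < 4 := by exact_mod_cast hlt
    have hge : (0 : ℝ) ≤ ((M % 4 : ℕ) : ℝ) := Nat.cast_nonneg _
    have hfloor : (⌊3 * (n : ℝ) ^ 2 / 4 - (n : ℝ) / 2⌋ : ℤ) = ((M / 4 : ℕ) : ℤ) := by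
      rw [hcast, Int.floor_eq_iff]
      constructor
      · rw [Int.cast_natCast]
        linarith
      · rw [Int.cast_natCast]
        linarith
    rw [hfloor]
    have hFeq : AvecAux.F n = M / 4 := rfl
    have hc0 : (0 : ℝ) < (n : ℝ) := by exact_mod_cast hpos
    have hsumR : (∑ v, (ecc G v : ℝ)) ≤ ((M / 4 : ℕ) : ℝ) := by
      rw [← hFeq]
      exact_mod_cast hsum
    calc avec G = (∑ v, (ecc G v : ℝ)) / (n : ℝ) := by rw [avec, hn]
      _ ≤ ((M / 4 : ℕ) : ℝ) / (n : ℝ) := by gcongr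
      _ = 1 / (n : ℝ) * (((M / 4 : ℕ) : ℤ) : ℝ) := by rw [Int.cast_natCast]; ring
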